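/- For every n ≥ 2, the distinguishing index of the friendship graph D_n^3 equals the minimum integer r such that (r^3 - r^2)/2 ≥ n. -/

import Mathlib

open SimpleGraph

/-- The distinguishing index: least number of labels in an edge labeling
preserved only by the identity automorphism. -/
noncomputable def distinguishingIndex {V : Type*} (G : SimpleGraph V) : ℕ :=
  sInf {d : ℕ | ∃ f : Sym2 V → Fin d,
    ∀ φ : G ≃g G, (∀ e ∈ G.edgeSet, f (Sym2.map ⇑φ e) = f e) → ∀ v, φ v = v}

/-- The distinguishing number: least number of labels in a vertex labeling
preserved only by the identity automorphism. -/
noncomputable def distinguishingNumber {V : Type*} (G : SimpleGraph V) : ℕ :=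
  sInf {d : ℕ | ∃ f : V → Fin d,
    ∀ φ : G ≃g G, (∀ v, f (φ v) = f v) → ∀ v, φ v = v}

/-- The dutch windmill graph `D_n^k`: `n` copies of the cycle `C_k`
sharing one common central vertex (`none`). -/
def windmill (n k : ℕ) : SimpleGraph (Option (Fin n × Fin (k - 1))) :=
  SimpleGraph.fromRel (fun a b =>
    match a, b with
    | none, some (_, j) => j.val = 0 ∨ j.val = k - 2
    | some (i, j), some (i', j') => i = i' ∧ j'.val = j.val + 1
    | _, _ => False)

namespace WindmillProof

variable {n : ℕ}

lemma wadj_none_some (x : Fin n × Fin 2) : (windmill n 3).Adj none (some x) := by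
  obtain ⟨i, j⟩ := x
  simp only [windmill, fromRel_adj]
  refine ⟨by simp, Or.inl ?_⟩
  omega

lemma wadj_some_iff (i i' : Fin n) (j j' : Fin 2) :
    (windmill n 3).Adj (some (i, j)) (some (i', j')) ↔ i = i' ∧ j ≠ j' := by
  simp only [windmill, fromRel_adj]
  constructor
  · rintro ⟨hne, h | h⟩
    · exact ⟨h.1, fun hj => by subst hj; omega⟩
    · exact ⟨h.1.symm, fun hj => by subst hj; omega⟩
  · rintro ⟨rfl, hj⟩
    have hv : j.val ≠ j'.val := fun h => hj (Fin.ext h)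
    have h1 := j.isLt; have h2 := j'.isLt
    exact ⟨by simp [Fin.ext_iff]; omega, by omega⟩

lemma wadj_not_none_none : ¬ (windmill n 3).Adj none none := by simp

lemma wadj_cases {a b : Option (Fin n × Fin 2)} (h : (windmill n 3).Adj a b) :
    (a = none ∧ ∃ x, b = some x) ∨ (b = none ∧ ∃ x, a = some x) ∨
    (∃ i j j', j ≠ j' ∧ a = some (i, j) ∧ b = some (i, j')) := by
  match a, b with
  | none, none => simp at h
  | none, some x => exact Or.inl ⟨rfl, x, rfl⟩
  | some x, none => exact Or.inr (Or.inl ⟨rfl, x, rfl⟩)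
  | some (i, j), some (i', j') =>
    rw [wadj_some_iff] at h
    exact Or.inr (Or.inr ⟨i, j, j', h.2, rfl, h.1 ▸ rfl⟩)

def jflip : Fin 2 → Fin 2 := fun j => if j = 0 then 1 else 0

lemma jflip_invol : ∀ j, jflip (jflip j) = j := by decide
lemma fin2_ne {j j' : Fin 2} (h : j ≠ j') : j' = jflip j := by revert h; revert j j'; decide
lemma jflip_ne (j : Fin 2) : jflip j ≠ j := by revert j; decide

def wperm (c : Fin n → Fin n) (τ : Fin n → Fin 2 → Fin 2) :
    Option (Fin n × Fin 2) → Option (Fin n × Fin 2)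
  | none => none
  | some (i, j) => some (c i, τ i j)

lemma wperm_invol {c : Fin n → Fin n} {τ : Fin n → Fin 2 → Fin 2}
    (hc : ∀ i, c (c i) = i) (hτ : ∀ i j, τ (c i) (τ i j) = j) :
    Function.Involutive (wperm c τ) := by
  rintro (_ | ⟨i, j⟩) <;> simp [wperm, hc, hτ]

lemma wperm_mono {c : Fin n → Fin n} {τ : Fin n → Fin 2 → Fin 2}
    (hc : ∀ i, c (c i) = i) (hτ : ∀ i j, τ (c i) (τ i j) = j)
    {a b : Option (Fin n × Fin 2)} (h : (windmill n 3).Adj a b) :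
    (windmill n 3).Adj (wperm c τ a) (wperm c τ b) := by
  rcases wadj_cases h with ⟨rfl, x, rfl⟩ | ⟨rfl, x, rfl⟩ | ⟨i, j, j', hj, rfl, rfl⟩
  · exact wadj_none_some _
  · exact ((windmill n 3).adj_symm (wadj_none_some _))
  · simp only [wperm]
    rw [wadj_some_iff]
    refine ⟨rfl, fun he => hj ?_⟩
    have := congrArg (τ (c i)) he
    rwa [hτ, hτ] at this

def wAuto (c : Fin n → Fin n) (τ : Fin n → Fin 2 → Fin 2)
    (hc : ∀ i, c (c i) = i) (hτ : ∀ i j, τ (c i) (τ i j) = j) :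
    windmill n 3 ≃g windmill n 3 where
  toEquiv := (wperm_invol hc hτ).toPerm
  map_rel_iff' := by
    intro a b
    constructor
    · intro h
      have h2 := wperm_mono hc hτ h
      have ea : wperm c τ (Function.Involutive.toPerm (wperm c τ) (wperm_invol hc hτ) a) = a :=
        wperm_invol hc hτ a
      have eb : wperm c τ (Function.Involutive.toPerm (wperm c τ) (wperm_invol hc hτ) b) = b :=
        wperm_invol hc hτ b
      rwa [ea, eb] at h2
    · exact wperm_mono hc hτ

@[simp] lemma wAuto_apply (c : Fin n → Fin n) (τ : Fin n → Fin 2 → Fin 2)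
    (hc : ∀ i, c (c i) = i) (hτ : ∀ i j, τ (c i) (τ i j) = j)
    (v : Option (Fin n × Fin 2)) : wAuto c τ hc hτ v = wperm c τ v := rfl

lemma phi_none (hn : 2 ≤ n) (φ : windmill n 3 ≃g windmill n 3) : φ none = none := by
  by_contra hne
  obtain ⟨⟨i, j⟩, hij⟩ : ∃ x, φ none = some x := by
    cases h : φ none with
    | none => exact absurd h hne
    | some x => exact ⟨x, rfl⟩
  have key : ∀ x : Fin n × Fin 2, φ (some x) = none ∨ φ (some x) = some (i, jflip j) := by
    intro x
    have hadj : (windmill n 3).Adj (φ none) (φ (some x)) :=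
      φ.map_rel_iff.mpr (wadj_none_some x)
    rw [hij] at hadj
    rcases wadj_cases hadj with ⟨h, _⟩ | ⟨h, _⟩ | ⟨i0, j0, j0', hj, h1, h2⟩
    · exact absurd h (by simp)
    · exact Or.inl h
    · obtain ⟨rfl, rfl⟩ : i0 = i ∧ j0 = j := by
        injection h1 with h1
        have := Prod.mk.inj h1.symm; exact this
      exact Or.inr (h2 ▸ by rw [fin2_ne hj])
  have hn1 : (1 : ℕ) < n := hn
  set v1 : Fin n × Fin 2 := (⟨0, by omega⟩, 0)
  set v2 : Fin n × Fin 2 := (⟨0, by omega⟩, 1)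
  set v3 : Fin n × Fin 2 := (⟨1, by omega⟩, 0)
  have e12 : v1 ≠ v2 := by simp [v1, v2]
  have e13 : v1 ≠ v3 := by simp [v1, v3, Fin.ext_iff]
  have e23 : v2 ≠ v3 := by simp [v2, v3, Fin.ext_iff]
  have inj : ∀ x y : Fin n × Fin 2, φ (some x) = φ (some y) → x = y := by
    intro x y h
    have := φ.injective h
    injection this
  rcases key v1 with h1 | h1 <;> rcases key v2 with h2 | h2 <;> rcases key v3 with h3 | h3
  · exact e12 (inj _ _ (h1.trans h2.symm))
  · exact e12 (inj _ _ (h1.trans h2.symm))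
  all_goals first
    | exact e13 (inj _ _ (h1.trans h3.symm))
    | exact e23 (inj _ _ (h2.trans h3.symm))
    | exact e12 (inj _ _ (h1.trans h2.symm))

lemma phi_some (hn : 2 ≤ n) (φ : windmill n 3 ≃g windmill n 3) (x : Fin n × Fin 2) :
    ∃ y, φ (some x) = some y := by
  cases h : φ (some x) with
  | none =>
    exfalso
    exact Option.some_ne_none x (φ.injective (h.trans (phi_none hn φ).symm))
  | some y => exact ⟨y, rfl⟩

/-- Structure: φ maps each triangle to a triangle -/
lemma phi_triangle (hn : 2 ≤ n) (φ : windmill n 3 ≃g windmill n 3) (i : Fin n) :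
    ∃ i' j0 j1, j0 ≠ j1 ∧ φ (some (i, 0)) = some (i', j0) ∧ φ (some (i, 1)) = some (i', j1) := by
  obtain ⟨⟨i0, j0⟩, h0⟩ := phi_some hn φ (i, 0)
  obtain ⟨⟨i1, j1⟩, h1⟩ := phi_some hn φ (i, 1)
  have hadj : (windmill n 3).Adj (φ (some (i, 0))) (φ (some (i, 1))) :=
    φ.map_rel_iff.mpr ((wadj_some_iff i i 0 1).mpr ⟨rfl, by decide⟩)
  rw [h0, h1, wadj_some_iff] at hadj
  exact ⟨i0, j0, j1, hadj.2, h0, hadj.1 ▸ h1⟩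


@[simp] lemma jflip_zero : jflip 0 = 1 := by decide
@[simp] lemma jflip_one : jflip 1 = 0 := by decide
lemma fin2_cases : ∀ j : Fin 2, j = 0 ∨ j = 1 := by decide
lemma fin2_10 : (1 : Fin 2) ≠ 0 := by decide
lemma fin2_01 : (0 : Fin 2) ≠ 1 := by decide
lemma fin2_pair : ∀ {j j' : Fin 2}, j ≠ j' → (j = 0 ∧ j' = 1) ∨ (j = 1 ∧ j' = 0) := by decide

open Finset

lemma card_lt_pairs (d : ℕ) :
    (univ.filter (fun p : Fin d × Fin d => p.1 < p.2)).card = (d ^ 2 - d) / 2 := by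
  classical
  set L := univ.filter (fun p : Fin d × Fin d => p.1 < p.2) with hL
  set G := univ.filter (fun p : Fin d × Fin d => p.2 < p.1) with hG
  set E := univ.filter (fun p : Fin d × Fin d => p.1 = p.2) with hE
  have hGL : G = L.image Prod.swap := by
    ext ⟨a, b⟩
    simp only [hG, hL, mem_filter, mem_univ, true_and, mem_image, Prod.exists, Prod.swap_prod_mk,
      Prod.mk.injEq]
    constructor
    · intro h; exact ⟨b, a, h, rfl, rfl⟩
    · rintro ⟨x, y, h, rfl, rfl⟩; exact h
  have hGcard : G.card = L.card := by
    rw [hGL, card_image_of_injective _ Prod.swap_injective]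
  have hEcard : E.card = d := by
    have : E = (univ : Finset (Fin d)).image (fun x => (x, x)) := by
      ext ⟨a, b⟩
      simp only [hE, mem_filter, mem_univ, true_and, mem_image, Prod.mk.injEq]
      constructor
      · rintro rfl; exact ⟨a, rfl, rfl⟩
      · rintro ⟨x, rfl, rfl⟩; rfl
    rw [this, card_image_of_injective, card_univ, Fintype.card_fin]
    intro x y h; exact (Prod.mk.inj h).1
  have h1 : L.card + (univ.filter (fun p : Fin d × Fin d => ¬ p.1 < p.2)).card = d ^ 2 := by
    rw [card_filter_add_card_filter_not, card_univ]
    simp [sq]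
  have h2 : (univ.filter (fun p : Fin d × Fin d => ¬ p.1 < p.2)).card = E.card + G.card := by
    rw [← card_filter_add_card_filter_not (p := fun p : Fin d × Fin d => p.1 = p.2),
      filter_filter, filter_filter]
    congr 1
    · congr 1; apply filter_congr; intro ⟨a, b⟩ _
      simp only [eq_iff_iff]
      constructor
      · exact fun h => h.2
      · rintro rfl; exact ⟨lt_irrefl a, rfl⟩
    · congr 1; apply filter_congr; intro ⟨a, b⟩ _
      simp only [eq_iff_iff]
      constructor
      · intro h; omega
      · intro h; omega
  have hd : d ≤ d ^ 2 := by nlinarith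
  omega

lemma even_sq_sub (d : ℕ) : 2 ∣ d ^ 2 - d := by
  cases d with
  | zero => simp
  | succ m =>
    have h : (m + 1) ^ 2 = m * (m + 1) + (m + 1) := by ring
    have h2 : (m + 1) ^ 2 - (m + 1) = m * (m + 1) := by omega
    rw [h2]
    exact (Nat.even_mul_succ_self m).two_dvd

lemma arith1 (d : ℕ) : (d ^ 2 - d) / 2 * d = (d ^ 3 - d ^ 2) / 2 := by
  obtain ⟨m, hm⟩ := even_sq_sub d
  have h3 : d ^ 3 - d ^ 2 = (d ^ 2 - d) * d := by
    have e1 : d ^ 2 * d = d ^ 3 := by ring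
    have e2 : d * d = d ^ 2 := by ring
    have h4 : (d ^ 2 - d) * d = d ^ 2 * d - d * d := Nat.sub_mul _ _ _
    omega
  rw [h3, hm]
  rw [Nat.mul_div_cancel_left m (by norm_num), mul_assoc, Nat.mul_div_cancel_left _ (by norm_num : 0 < 2)]

lemma card_triples (d : ℕ) :
    (univ.filter (fun p : (Fin d × Fin d) × Fin d => p.1.1 < p.1.2)).card = (d ^ 3 - d ^ 2) / 2 := by
  have h : (univ.filter (fun p : (Fin d × Fin d) × Fin d => p.1.1 < p.1.2)) =
      (univ.filter (fun p : Fin d × Fin d => p.1 < p.2)) ×ˢ univ := by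
    ext ⟨⟨a, b⟩, c⟩
    simp [mem_product]
  rw [h, card_product, card_lt_pairs, card_univ, Fintype.card_fin, arith1]

lemma pair_eq {α : Type*} [LinearOrder α] {a b c d : α}
    (h1 : a ⊓ b = c ⊓ d) (h2 : a ⊔ b = c ⊔ d) :
    (a = c ∧ b = d) ∨ (a = d ∧ b = c) := by
  rcases le_total a b with hab | hab <;> rcases le_total c d with hcd | hcd
  · rw [inf_of_le_left hab, inf_of_le_left hcd] at h1
    rw [sup_of_le_right hab, sup_of_le_right hcd] at h2
    exact Or.inl ⟨h1, h2⟩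
  · rw [inf_of_le_left hab, inf_of_le_right hcd] at h1
    rw [sup_of_le_right hab, sup_of_le_left hcd] at h2
    exact Or.inr ⟨h1, h2⟩
  · rw [inf_of_le_right hab, inf_of_le_left hcd] at h1
    rw [sup_of_le_left hab, sup_of_le_right hcd] at h2
    exact Or.inr ⟨h2, h1⟩
  · rw [inf_of_le_right hab, inf_of_le_right hcd] at h1
    rw [sup_of_le_left hab, sup_of_le_left hcd] at h2
    exact Or.inl ⟨h2, h1⟩

example {α : Type*} [LinearOrder α] {a b : α} (h : a ≠ b) : a ⊓ b < a ⊔ b := inf_lt_sup.mpr h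

lemma pres_of {d : ℕ} {c : Fin n → Fin n} {τ : Fin n → Fin 2 → Fin 2}
    (hc : ∀ i, c (c i) = i) (hτ : ∀ i j, τ (c i) (τ i j) = j)
    (f : Sym2 (Option (Fin n × Fin 2)) → Fin d)
    (hs : ∀ (i : Fin n) (j : Fin 2), f s(none, some (c i, τ i j)) = f s(none, some (i, j)))
    (ho : ∀ i : Fin n, f s(some (c i, τ i 0), some (c i, τ i 1)) = f s(some (i, 0), some (i, 1))) :
    ∀ e ∈ (windmill n 3).edgeSet, f (Sym2.map ⇑(wAuto c τ hc hτ) e) = f e := by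
  intro e he
  induction e with
  | _ u v =>
    rw [Sym2.map_pair_eq]
    rw [mem_edgeSet] at he
    rcases wadj_cases he with ⟨rfl, ⟨i, j⟩, rfl⟩ | ⟨rfl, ⟨i, j⟩, rfl⟩ | ⟨i, j, j', hj, rfl, rfl⟩
    · simpa only [wAuto_apply, wperm] using hs i j
    · have h1 : s((some (i, j) : Option (Fin n × Fin 2)), none) = s(none, some (i, j)) :=
        Sym2.eq_swap
      have h2 : s(wAuto c τ hc hτ (some (i, j)), wAuto c τ hc hτ none)
          = s(wAuto c τ hc hτ none, wAuto c τ hc hτ (some (i, j))) := Sym2.eq_swap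
      rw [h2, h1]
      simpa only [wAuto_apply, wperm] using hs i j
    · rcases fin2_pair hj with ⟨rfl, rfl⟩ | ⟨rfl, rfl⟩
      · simpa only [wAuto_apply, wperm] using ho i
      · have h1 : s((some (i, (1:Fin 2)) : Option (Fin n × Fin 2)), some (i, 0))
            = s(some (i, 0), some (i, 1)) := Sym2.eq_swap
        have h2 : s(wAuto c τ hc hτ (some (i, (1:Fin 2))), wAuto c τ hc hτ (some (i, 0)))
            = s(wAuto c τ hc hτ (some (i, 0)), wAuto c τ hc hτ (some (i, 1))) := Sym2.eq_swap
        rw [h2, h1]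
        simpa only [wAuto_apply, wperm] using ho i

open Finset in
lemma fwd {d : ℕ} (hn : 2 ≤ n)
    (h : ∃ f : Sym2 (Option (Fin n × Fin (3 - 1))) → Fin d,
      ∀ φ : windmill n 3 ≃g windmill n 3,
        (∀ e ∈ (windmill n 3).edgeSet, f (Sym2.map ⇑φ e) = f e) → ∀ v, φ v = v) :
    n ≤ (d ^ 3 - d ^ 2) / 2 := by
  classical
  obtain ⟨f, hf⟩ := h
  set A : Fin n → Fin d := fun i => f s(none, some (i, 0)) with hA
  set B : Fin n → Fin d := fun i => f s(none, some (i, 1)) with hB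
  set C : Fin n → Fin d := fun i => f s(some (i, 0), some (i, 1)) with hC
  have houter : ∀ (i : Fin n) (j j' : Fin 2), j ≠ j' →
      f s(some (i, j), some (i, j')) = C i := by
    intro i j j' hj
    rcases fin2_pair hj with ⟨rfl, rfl⟩ | ⟨rfl, rfl⟩
    · rfl
    · have he : s((some (i, (1:Fin 2)) : Option (Fin n × Fin 2)), some (i, 0))
          = s(some (i, 0), some (i, 1)) := Sym2.eq_swap
      rw [he]
  -- Claim 1: within each triangle the two spoke labels differ
  have hab : ∀ i, A i ≠ B i := by
    intro i hEq
    set τ : Fin n → Fin 2 → Fin 2 := fun i' j => if i' = i then jflip j else j with hτdef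
    have hτi : ∀ j, τ i j = jflip j := by intro j; simp [hτdef]
    have hτo : ∀ x, x ≠ i → ∀ j, τ x j = j := by
      intro x hx j; simp only [hτdef]; rw [if_neg hx]
    have hc : ∀ i' : Fin n, id (id i') = i' := fun _ => rfl
    have hτ : ∀ i' j, τ (id i') (τ i' j) = j := by
      intro i' j
      by_cases h : i' = i
      · subst h; rw [id_eq, hτi, hτi, jflip_invol]
      · rw [id_eq, hτo i' h, hτo i' h]
    have hs' : ∀ (i'' : Fin n) (j : Fin 2),
        f s(none, some (id i'', τ i'' j)) = f s(none, some (i'', j)) := by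
      intro i'' j
      rw [id_eq]
      by_cases h : i'' = i
      · subst h
        rw [hτi]
        rcases fin2_cases j with rfl | rfl
        · rw [jflip_zero]; exact hEq.symm
        · rw [jflip_one]; exact hEq
      · rw [hτo i'' h]
    have ho' : ∀ i'' : Fin n,
        f s(some (id i'', τ i'' 0), some (id i'', τ i'' 1))
          = f s(some (i'', 0), some (i'', 1)) := by
      intro i''
      rw [id_eq]
      by_cases h : i'' = i
      · subst h
        rw [hτi, hτi, jflip_zero, jflip_one]
        exact houter i'' 1 0 fin2_10
      · rw [hτo i'' h, hτo i'' h]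
    have hid := hf (wAuto id τ hc hτ) (pres_of hc hτ f hs' ho') (some (i, 0))
    rw [wAuto_apply] at hid
    have h2 : wperm id τ (some (i, 0)) = some (i, 1) := by
      show some (id i, τ i 0) = some (i, 1)
      rw [id_eq, hτi, jflip_zero]
    rw [h2] at hid
    have h3 : (1 : Fin 2) = 0 := congrArg Prod.snd (Option.some.inj hid)
    exact fin2_10 h3
  -- Claim 2: triangle types are injective
  set t : Fin n → (Fin d × Fin d) × Fin d :=
    fun i => ((A i ⊓ B i, A i ⊔ B i), C i) with ht
  have tinj : Function.Injective t := by
    intro i i' hEq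
    by_contra hne
    have h1 : A i ⊓ B i = A i' ⊓ B i' := congrArg (fun p => p.1.1) hEq
    have h2 : A i ⊔ B i = A i' ⊔ B i' := congrArg (fun p => p.1.2) hEq
    have h3 : C i = C i' := congrArg (fun p => p.2) hEq
    set cs : Fin n → Fin n := fun x => if x = i then i' else if x = i' then i else x with hcs
    have hcsi : cs i = i' := by simp [hcs]
    have hcsi' : cs i' = i := by
      simp [hcs, Ne.symm hne]
    have hcso : ∀ x, x ≠ i → x ≠ i' → cs x = x := by
      intro x hx hx'; simp only [hcs]; rw [if_neg hx, if_neg hx']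
    have hc : ∀ x, cs (cs x) = x := by
      intro x
      by_cases hx : x = i
      · subst hx; rw [hcsi, hcsi']
      · by_cases hx' : x = i'
        · subst hx'; rw [hcsi', hcsi]
        · rw [hcso x hx hx', hcso x hx hx']
    have hCs : ∀ x, C (cs x) = C x := by
      intro x
      by_cases hx : x = i
      · subst hx; rw [hcsi, h3]
      · by_cases hx' : x = i'
        · subst hx'; rw [hcsi', h3]
        · rw [hcso x hx hx']
    rcases pair_eq h1 h2 with ⟨ha, hb⟩ | ⟨ha, hb⟩
    · -- straight swap : A i = A i', B i = B i'
      set τ : Fin n → Fin 2 → Fin 2 := fun _ j => j with hτdef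
      have hτ : ∀ x j, τ (cs x) (τ x j) = j := fun _ _ => rfl
      have hs' : ∀ (x : Fin n) (j : Fin 2),
          f s(none, some (cs x, τ x j)) = f s(none, some (x, j)) := by
        intro x j
        show f s(none, some (cs x, j)) = f s(none, some (x, j))
        by_cases hx : x = i
        · subst hx; rw [hcsi]
          rcases fin2_cases j with rfl | rfl
          · exact ha.symm
          · exact hb.symm
        · by_cases hx' : x = i'
          · subst hx'; rw [hcsi']
            rcases fin2_cases j with rfl | rfl
            · exact ha
            · exact hb
          · rw [hcso x hx hx']
      have ho' : ∀ x : Fin n,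
          f s(some (cs x, τ x 0), some (cs x, τ x 1)) = f s(some (x, 0), some (x, 1)) := by
        intro x
        show f s(some (cs x, 0), some (cs x, 1)) = f s(some (x, 0), some (x, 1))
        have e1 : f s(some (cs x, (0:Fin 2)), some (cs x, 1)) = C (cs x) :=
          houter (cs x) 0 1 fin2_01
        rw [e1, hCs x]
      have hid := hf (wAuto cs τ hc hτ) (pres_of hc hτ f hs' ho') (some (i, 0))
      rw [wAuto_apply] at hid
      have h4 : wperm cs τ (some (i, 0)) = some (i', 0) := by
        show some (cs i, τ i 0) = some (i', 0)
        rw [hcsi]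
      rw [h4] at hid
      exact hne (congrArg Prod.fst (Option.some.inj hid)).symm
    · -- crossed swap : A i = B i', B i = A i'
      set τ : Fin n → Fin 2 → Fin 2 := fun x j => if x = i ∨ x = i' then jflip j else j
        with hτdef
      have hτi : ∀ j, τ i j = jflip j := by
        intro j; simp [hτdef]
      have hτi' : ∀ j, τ i' j = jflip j := by
        intro j; simp [hτdef]
      have hτo : ∀ x, x ≠ i → x ≠ i' → ∀ j, τ x j = j := by
        intro x hx hx' j; simp only [hτdef]
        rw [if_neg (by rintro (h | h) <;> [exact hx h; exact hx' h])]
      have hτ : ∀ x j, τ (cs x) (τ x j) = j := by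
        intro x j
        by_cases hx : x = i
        · subst hx; rw [hcsi, hτi, hτi', jflip_invol]
        · by_cases hx' : x = i'
          · subst hx'; rw [hcsi', hτi', hτi, jflip_invol]
          · rw [hcso x hx hx', hτo x hx hx', hτo x hx hx']
      have hs' : ∀ (x : Fin n) (j : Fin 2),
          f s(none, some (cs x, τ x j)) = f s(none, some (x, j)) := by
        intro x j
        by_cases hx : x = i
        · subst hx; rw [hcsi, hτi]
          rcases fin2_cases j with rfl | rfl
          · rw [jflip_zero]; exact ha.symm
          · rw [jflip_one]; exact hb.symm
        · by_cases hx' : x = i'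
          · subst hx'; rw [hcsi', hτi']
            rcases fin2_cases j with rfl | rfl
            · rw [jflip_zero]; exact hb
            · rw [jflip_one]; exact ha
          · rw [hcso x hx hx', hτo x hx hx']
      have ho' : ∀ x : Fin n,
          f s(some (cs x, τ x 0), some (cs x, τ x 1)) = f s(some (x, 0), some (x, 1)) := by
        intro x
        by_cases hx : x = i
        · subst hx; rw [hcsi, hτi, hτi, jflip_zero, jflip_one]
          rw [houter i' 1 0 fin2_10, houter x 0 1 fin2_01]
          exact h3.symm
        · by_cases hx' : x = i'
          · subst hx'; rw [hcsi', hτi', hτi', jflip_zero, jflip_one]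
            rw [houter i 1 0 fin2_10, houter x 0 1 fin2_01]
            exact h3
          · rw [hcso x hx hx', hτo x hx hx', hτo x hx hx']
      have hid := hf (wAuto cs τ hc hτ) (pres_of hc hτ f hs' ho') (some (i, 0))
      rw [wAuto_apply] at hid
      have h4 : wperm cs τ (some (i, 0)) = some (i', 1) := by
        show some (cs i, τ i 0) = some (i', 1)
        rw [hcsi, hτi, jflip_zero]
      rw [h4] at hid
      exact hne (congrArg Prod.fst (Option.some.inj hid)).symm
  -- counting
  have hmem : ∀ x ∈ (univ : Finset (Fin n)),
      t x ∈ univ.filter (fun p : (Fin d × Fin d) × Fin d => p.1.1 < p.1.2) := by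
    intro x _
    simp only [mem_filter, mem_univ, true_and, ht]
    exact inf_lt_sup.mpr (hab x)
  have hcard := Finset.card_le_card_of_injOn t hmem tinj.injOn
  rwa [card_univ, Fintype.card_fin, card_triples] at hcard

def wlabelF {d : ℕ} (A B C : Fin n → Fin d) (z : Fin d) :
    Option (Fin n × Fin 2) → Option (Fin n × Fin 2) → Fin d := fun u v =>
  match u, v with
  | none, none => z
  | none, some (i, j) => if j = 0 then A i else B i
  | some (i, j), none => if j = 0 then A i else B i
  | some (i, j), some (i', j') => if i = i' ∧ j ≠ j' then C i else z

lemma wlabelF_symm {d : ℕ} (A B C : Fin n → Fin d) (z : Fin d) :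
    ∀ u v, wlabelF A B C z u v = wlabelF A B C z v u := by
  rintro (_ | ⟨i, j⟩) (_ | ⟨i', j'⟩)
  · rfl
  · rfl
  · rfl
  · show (if i = i' ∧ j ≠ j' then C i else z) = (if i' = i ∧ j' ≠ j then C i' else z)
    by_cases hc : i = i' ∧ j ≠ j'
    · rw [if_pos hc, if_pos ⟨hc.1.symm, Ne.symm hc.2⟩, hc.1]
    · rw [if_neg hc, if_neg (fun h' => hc ⟨h'.1.symm, Ne.symm h'.2⟩)]

open Finset in
lemma bwd {d : ℕ} (hn : 2 ≤ n) (h : n ≤ (d ^ 3 - d ^ 2) / 2) :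
    ∃ f : Sym2 (Option (Fin n × Fin (3 - 1))) → Fin d,
      ∀ φ : windmill n 3 ≃g windmill n 3,
        (∀ e ∈ (windmill n 3).edgeSet, f (Sym2.map ⇑φ e) = f e) → ∀ v, φ v = v := by
  classical
  have hd : 0 < d := by
    rcases Nat.eq_zero_or_pos d with rfl | h'
    · norm_num at h; omega
    · exact h'
  have hcard : Fintype.card (Fin n) ≤
      Fintype.card {p : (Fin d × Fin d) × Fin d // p.1.1 < p.1.2} := by
    rw [Fintype.card_fin, Fintype.card_subtype, card_triples]
    exact h
  obtain ⟨g⟩ := Function.Embedding.nonempty_of_card_le hcard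
  set A : Fin n → Fin d := fun i => (g i : (Fin d × Fin d) × Fin d).1.1 with hA
  set B : Fin n → Fin d := fun i => (g i : (Fin d × Fin d) × Fin d).1.2 with hB
  set C : Fin n → Fin d := fun i => (g i : (Fin d × Fin d) × Fin d).2 with hC
  have hAB : ∀ i, A i < B i := fun i => (g i).2
  set z : Fin d := ⟨0, hd⟩ with hz
  set f : Sym2 (Option (Fin n × Fin (3 - 1))) → Fin d :=
    Sym2.lift ⟨wlabelF A B C z, wlabelF_symm A B C z⟩ with hfdef
  have fspoke : ∀ (i : Fin n) (j : Fin 2),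
      f s(none, some (i, j)) = if j = 0 then A i else B i := fun i j => rfl
  have fouter : ∀ (i i' : Fin n) (j j' : Fin 2),
      f s(some (i, j), some (i', j')) = if i = i' ∧ j ≠ j' then C i else z :=
    fun i i' j j' => rfl
  refine ⟨f, ?_⟩
  intro φ hpres
  have hnone := phi_none hn φ
  have hfix : ∀ i : Fin n, φ (some (i, 0)) = some (i, 0) ∧ φ (some (i, 1)) = some (i, 1) := by
    intro i
    obtain ⟨i', j0, j1, hj, h0, h1⟩ := phi_triangle hn φ i
    have p0 := hpres s(none, some (i, 0)) (((windmill n 3).mem_edgeSet).mpr (wadj_none_some _))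
    rw [Sym2.map_pair_eq, hnone, h0, fspoke, fspoke] at p0
    have p1 := hpres s(none, some (i, 1)) (((windmill n 3).mem_edgeSet).mpr (wadj_none_some _))
    rw [Sym2.map_pair_eq, hnone, h1, fspoke, fspoke] at p1
    have pout := hpres s(some (i, 0), some (i, 1))
      (((windmill n 3).mem_edgeSet).mpr ((wadj_some_iff i i 0 1).mpr ⟨rfl, fin2_01⟩))
    rw [Sym2.map_pair_eq, h0, h1, fouter, fouter] at pout
    rw [if_pos ⟨rfl, hj⟩, if_pos ⟨rfl, fin2_01⟩] at pout
    rw [if_pos rfl] at p0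
    rw [if_neg fin2_10] at p1
    rcases fin2_cases j0 with rfl | rfl
    · -- straight
      have hj1 : j1 = 1 := by
        rcases fin2_cases j1 with rfl | rfl
        · exact absurd rfl hj
        · rfl
      subst hj1
      rw [if_pos rfl] at p0
      rw [if_neg fin2_10] at p1
      have hgg : (g i' : (Fin d × Fin d) × Fin d) = (g i : (Fin d × Fin d) × Fin d) := by
        have e : ∀ k : Fin n, (g k : (Fin d × Fin d) × Fin d) = ((A k, B k), C k) :=
          fun k => rfl
        rw [e, e, p0, p1, pout]
      have hii : i' = i := g.injective (Subtype.ext hgg)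
      subst hii
      exact ⟨h0, h1⟩
    · -- crossed: contradiction
      exfalso
      have hj1 : j1 = 0 := by
        rcases fin2_cases j1 with rfl | rfl
        · rfl
        · exact absurd rfl hj
      subst hj1
      rw [if_neg fin2_10] at p0
      rw [if_pos rfl] at p1
      have h5 := hAB i'
      rw [p1, p0] at h5
      exact absurd (hAB i) (lt_asymm h5)
  intro v
  match v with
  | none => exact hnone
  | some (i, j) =>
    rcases fin2_cases j with rfl | rfl
    · exact (hfix i).1
    · exact (hfix i).2

end WindmillProof

open WindmillProof in
theorem distinguishingIndex_friendship (n : ℕ) (hn : 2 ≤ n) :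
    distinguishingIndex (windmill n 3) =
      sInf {r : ℕ | n ≤ (r ^ 3 - r ^ 2) / 2} := by
  have hset : {d : ℕ | ∃ f : Sym2 (Option (Fin n × Fin (3 - 1))) → Fin d,
      ∀ φ : windmill n 3 ≃g windmill n 3,
        (∀ e ∈ (windmill n 3).edgeSet, f (Sym2.map ⇑φ e) = f e) → ∀ v, φ v = v}
      = {r : ℕ | n ≤ (r ^ 3 - r ^ 2) / 2} := by
    ext d
    simp only [Set.mem_setOf_eq]
    exact ⟨fun hd => fwd hn hd, fun hd => bwd hn hd⟩
  unfold distinguishingIndex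
  exact congrArg sInf hset
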